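/- For all n ≥ 1, every permutation π of length n avoiding both 132 and 321 has the form π = (I_a ⊖ I_b) ⊕ I_{n−a−b} for some integers a, b with 1 ≤ a ≤ n and 0 ≤ b ≤ n − a. -/
import Mathlib


open scoped Classical

/-- The word `π₁π₂⋯π_n` of a permutation of `{1,…,n}`, with values in `{1,…,n}`. -/
def permWord {n : ℕ} (π : Equiv.Perm (Fin n)) : List ℕ :=
  List.ofFn fun i => (π i : ℕ) + 1

/-- The word `l` contains the word `ρ` as a (classical) pattern. -/
def ContainsPat (l ρ : List ℕ) : Prop :=
  ∃ f : Fin ρ.length → Fin l.length, StrictMono f ∧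
    ∀ a b : Fin ρ.length, ρ.get a < ρ.get b ↔ l.get (f a) < l.get (f b)

/-- `l` avoids every pattern in the list `B`. -/
def AvoidsAll (l : List ℕ) (B : List (List ℕ)) : Prop :=
  ∀ ρ ∈ B, ¬ ContainsPat l ρ

/-- Number of ascents of the word `l`. -/
def ascents (l : List ℕ) : ℕ :=
  ((Finset.range (l.length - 1)).filter fun i => l.getD i 0 < l.getD (i + 1) 0).card

/-- Number of descents of the word `l`. -/
def descents (l : List ℕ) : ℕ :=
  ((Finset.range (l.length - 1)).filter fun i => l.getD (i + 1) 0 < l.getD i 0).card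

/-- Number of double ascents of the word `l`. -/
def dascents (l : List ℕ) : ℕ :=
  ((Finset.range (l.length - 2)).filter fun i =>
    l.getD i 0 < l.getD (i + 1) 0 ∧ l.getD (i + 1) 0 < l.getD (i + 2) 0).card

/-- Number of double descents of the word `l`. -/
def ddescents (l : List ℕ) : ℕ :=
  ((Finset.range (l.length - 2)).filter fun i =>
    l.getD (i + 1) 0 < l.getD i 0 ∧ l.getD (i + 2) 0 < l.getD (i + 1) 0).card

/-- Number of peaks of the word `l`. -/
def peaks (l : List ℕ) : ℕ :=
  ((Finset.range (l.length - 2)).filter fun i =>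
    l.getD i 0 < l.getD (i + 1) 0 ∧ l.getD (i + 2) 0 < l.getD (i + 1) 0).card

/-- Number of valleys of the word `l`. -/
def valleys (l : List ℕ) : ℕ :=
  ((Finset.range (l.length - 2)).filter fun i =>
    l.getD (i + 1) 0 < l.getD i 0 ∧ l.getD (i + 1) 0 < l.getD (i + 2) 0).card

/-- `acount n k stat B` is the number of permutations of `{1,…,n}` avoiding all
patterns in `B` whose statistic `stat` equals `k`. -/
noncomputable def acount (n k : ℕ) (stat : List ℕ → ℕ) (B : List (List ℕ)) : ℕ :=
  (Finset.univ.filter fun π : Equiv.Perm (Fin n) =>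
    AvoidsAll (permWord π) B ∧ stat (permWord π) = k).card

/-- The increasing word `1 2 ⋯ m` (the identity permutation `I_m`). -/
def Iword (m : ℕ) : List ℕ := (List.range m).map (· + 1)

/-- Direct sum `α ⊕ β` of permutation words. -/
def oplus (α β : List ℕ) : List ℕ := α ++ β.map (· + α.length)

/-- Skew sum `α ⊖ β` of permutation words. -/
def ominus (α β : List ℕ) : List ℕ := α.map (· + β.length) ++ β

lemma card_filter_val (n : ℕ) (P : ℕ → Prop) [DecidablePred P] :
    (Finset.univ.filter fun k : Fin n => P k.val).card = ((Finset.range n).filter P).card := by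
  rw [← Finset.card_image_of_injective _ Fin.val_injective]
  congr 1
  ext x
  simp only [Finset.mem_image, Finset.mem_filter, Finset.mem_univ, true_and, Finset.mem_range]
  constructor
  · rintro ⟨k, hk, rfl⟩; exact ⟨k.isLt, hk⟩
  · rintro ⟨hx, hP⟩; exact ⟨⟨x, hx⟩, hP, rfl⟩

lemma word_eq (n a b : ℕ) (w : Fin n → ℕ) (ha : 1 ≤ a) (hab : a + b ≤ n)
    (hfor : ∀ i : Fin n,
      w i = if i.val < a then b + i.val + 1 else if i.val < a + b then i.val - a + 1
        else i.val + 1) :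
    List.ofFn w = oplus (ominus (Iword a) (Iword b)) (Iword (n - a - b)) := by
  have hL : (oplus (ominus (Iword a) (Iword b)) (Iword (n - a - b))).length = n := by
    simp [oplus, ominus, Iword]; omega
  apply List.ext_getElem
  · simpa using hL.symm
  · intro i h1 h2
    simp only [List.getElem_ofFn]
    rw [hfor]
    simp only [List.length_ofFn] at h1
    simp only [oplus, ominus, Iword, List.getElem_append, List.getElem_map, List.getElem_range,
      List.length_append, List.length_map, List.length_range]
    split_ifs <;> simp_all <;> omega

theorem stmt16 (n : ℕ) (hn : 1 ≤ n) (π : Equiv.Perm (Fin n))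
    (h : AvoidsAll (permWord π) [[1,3,2],[3,2,1]]) :
    ∃ a b : ℕ, 1 ≤ a ∧ a ≤ n ∧ b ≤ n - a ∧
      permWord π = oplus (ominus (Iword a) (Iword b)) (Iword (n - a - b)) := by
  set w : Fin n → ℕ := fun i => (π i : ℕ) + 1 with hw
  have hlen : (permWord π).length = n := by simp [permWord]
  have hget : ∀ (x : ℕ) (hx : x < n), (permWord π)[x]'(by rw [hlen]; exact hx) = w ⟨x, hx⟩ := by
    intro x hx; simp [permWord, List.getElem_ofFn, hw]
  -- pattern avoidance in terms of w
  have h132 : ∀ i j k : Fin n, i < j → j < k → w i < w k → w k < w j → False := by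
    intro i j k hij hjk h1 h2
    refine h [1,3,2] (by simp)
      ⟨fun t => Fin.cast hlen.symm (if t.val = 0 then i else if t.val = 1 then j else k), ?_, ?_⟩
    · rw [Fin.strictMono_iff_lt_succ]
      intro t
      fin_cases t <;>
        simp only [Fin.lt_def, Fin.coe_cast, Fin.castSucc, Fin.succ, Fin.castAdd, Fin.castLE] <;>
        norm_num <;> [exact hij; exact hjk]
    · intro a b
      fin_cases a <;> fin_cases b <;>
        simp only [List.get_eq_getElem, Fin.coe_cast] <;>
        norm_num <;>
        simp only [hget _ i.isLt, hget _ j.isLt, hget _ k.isLt, Fin.eta] <;> omega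
  have h321 : ∀ i j k : Fin n, i < j → j < k → w k < w j → w j < w i → False := by
    intro i j k hij hjk h1 h2
    refine h [3,2,1] (by simp)
      ⟨fun t => Fin.cast hlen.symm (if t.val = 0 then i else if t.val = 1 then j else k), ?_, ?_⟩
    · rw [Fin.strictMono_iff_lt_succ]
      intro t
      fin_cases t <;>
        simp only [Fin.lt_def, Fin.coe_cast, Fin.castSucc, Fin.succ, Fin.castAdd, Fin.castLE] <;>
        norm_num <;> [exact hij; exact hjk]
    · intro a b
      fin_cases a <;> fin_cases b <;>
        simp only [List.get_eq_getElem, Fin.coe_cast] <;>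
        norm_num <;>
        simp only [hget _ i.isLt, hget _ j.isLt, hget _ k.isLt, Fin.eta] <;> omega
  -- basic facts about w
  have hinj : Function.Injective w := by
    intro x y hxy
    simp only [hw] at hxy
    exact π.injective (Fin.val_injective (by omega))
  have hlb : ∀ i, 1 ≤ w i := by intro i; simp [hw]
  have hub : ∀ i, w i ≤ n := by intro i; have := (π i).isLt; simp only [hw]; omega
  have hsurj : ∀ v, 1 ≤ v → v ≤ n → ∃ i, w i = v := by
    intro v h1 h2
    refine ⟨π.symm ⟨v - 1, by omega⟩, ?_⟩
    simp only [hw, Equiv.apply_symm_apply]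
    omega
  have htri : ∀ i j : Fin n, i ≠ j → w i < w j ∨ w j < w i := by
    intro i j hij
    rcases lt_trichotomy (w i) (w j) with h' | h' | h'
    · exact Or.inl h'
    · exact absurd (hinj h') hij
    · exact Or.inr h'
  -- rank formula
  have hrank : ∀ i : Fin n, w i = (Finset.univ.filter fun j => w j < w i).card + 1 := by
    intro i
    have himg : (Finset.univ.filter fun j => w j < w i).image w = Finset.Icc 1 (w i - 1) := by
      ext v
      simp only [Finset.mem_image, Finset.mem_filter, Finset.mem_univ, true_and, Finset.mem_Icc]
      constructor
      · rintro ⟨j, hj, rfl⟩; exact ⟨hlb j, by omega⟩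
      · rintro ⟨h1, h2⟩
        have hwi := hub i
        have hwi1 := hlb i
        obtain ⟨j, hj⟩ := hsurj v h1 (by omega)
        exact ⟨j, by omega, hj⟩
    have hc := Finset.card_image_of_injective
      (Finset.univ.filter fun j => w j < w i) hinj
    rw [himg, Nat.card_Icc] at hc
    have := hlb i
    omega
  -- a generic way to finish once the pointwise formula is known
  have finish : ∀ a b : ℕ, 1 ≤ a → a + b ≤ n →
      (∀ i : Fin n, w i = if i.val < a then b + i.val + 1 else if i.val < a + b then
        i.val - a + 1 else i.val + 1) →
      ∃ a b : ℕ, 1 ≤ a ∧ a ≤ n ∧ b ≤ n - a ∧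
        permWord π = oplus (ominus (Iword a) (Iword b)) (Iword (n - a - b)) := by
    intro a b ha hab hfor
    refine ⟨a, b, ha, by omega, by omega, ?_⟩
    have hpw : permWord π = List.ofFn w := by simp [permWord, hw]
    rw [hpw]
    exact word_eq n a b w ha hab hfor
  set i0 : Fin n := ⟨0, hn⟩ with hi0
  by_cases hb0 : w i0 = 1
  · -- Case A : the word is the identity
    have mono : ∀ i j : Fin n, i < j → w i < w j := by
      intro i j hij
      rcases htri i j (ne_of_lt hij) with h' | h'
      · exact h'
      exfalso
      have hwj1 : 1 ≤ w j := hlb j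
      have hwi2 : 2 ≤ w i := by omega
      have hine : i ≠ i0 := by
        intro e; rw [e, hb0] at hwi2; omega
      have hi0i : i0 < i := by
        rw [Fin.lt_def]
        rcases Nat.eq_zero_or_pos i.val with hz | hz
        · exact absurd (Fin.ext hz : i = i0) hine
        · simpa [hi0] using hz
      have hjne : w j ≠ 1 := by
        intro e
        have : j = i0 := hinj (by rw [e, hb0])
        rw [this] at hij
        exact absurd (lt_trans hi0i hij) (lt_irrefl i0)
      exact h132 i0 i j hi0i hij (by omega) h'
    have hA : ∀ i : Fin n, w i = i.val + 1 := by
      intro i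
      have hset : (Finset.univ.filter fun j => w j < w i)
          = Finset.univ.filter (fun j : Fin n => j.val < i.val) := by
        ext j
        simp only [Finset.mem_filter, Finset.mem_univ, true_and]
        constructor
        · intro hji
          by_contra hc
          push_neg at hc
          rcases eq_or_lt_of_le hc with he | hlt
          · exact absurd hji (by rw [(Fin.ext he : i = j)]; exact lt_irrefl _)
          · exact absurd hji (by have := mono i j (Fin.lt_def.mpr hlt); omega)
        · intro hji
          exact mono j i (Fin.lt_def.mpr hji)
      have hcard : (Finset.univ.filter fun j => w j < w i).card = i.val := by
        rw [hset, card_filter_val n (fun x => x < i.val)]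
        have hi := i.isLt
        have : (Finset.range n).filter (fun x => x < i.val) = Finset.range i.val := by
          ext x
          simp only [Finset.mem_filter, Finset.mem_range]
          omega
        rw [this, Finset.card_range]
      rw [hrank i, hcard]
    apply finish 1 0 le_rfl (by omega)
    intro i
    rw [hA i]
    split_ifs <;> omega
  · -- Case B
    set b : ℕ := w i0 - 1 with hbdef
    have hb1 : 1 ≤ b := by have := hlb i0; omega
    have hb : w i0 = b + 1 := by have := hlb i0; omega
    obtain ⟨p, hp⟩ := hsurj 1 le_rfl hn
    have hpne : p ≠ i0 := by intro e; rw [e, hb] at hp; omega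
    have hp0 : 1 ≤ p.val := by
      rcases Nat.eq_zero_or_pos p.val with hz | hz
      · exact absurd (Fin.ext hz : p = i0) hpne
      · exact hz
    have hne1 : ∀ j : Fin n, j ≠ p → 2 ≤ w j := by
      intro j hj
      have := hlb j
      rcases Nat.lt_or_ge (w j) 2 with h' | h'
      · exfalso; exact hj (hinj (by omega : w j = w p))
      · exact h'
    have step1 : ∀ i : Fin n, i.val < p.val → b + 1 ≤ w i := by
      intro i hi
      by_contra hc
      push_neg at hc
      have hip : i ≠ p := by intro e; rw [e] at hi; omega
      have h2 : 2 ≤ w i := hne1 i hip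
      have hii0 : i ≠ i0 := by intro e; rw [e, hb] at hc; omega
      have hi0i : i0 < i := by
        rw [Fin.lt_def]
        rcases Nat.eq_zero_or_pos i.val with hz | hz
        · exact absurd (Fin.ext hz : i = i0) hii0
        · simpa [hi0] using hz
      exact h321 i0 i p hi0i (Fin.lt_def.mpr hi) (by omega) (by rw [hb]; omega)
    have monoTail : ∀ i j : Fin n, p.val ≤ i.val → i < j → w i < w j := by
      intro i j hpi hij
      rcases htri i j (ne_of_lt hij) with h' | h'
      · exact h'
      exfalso
      rcases eq_or_lt_of_le hpi with he | hlt
      · rw [← Fin.ext he, hp] at h'; have := hlb j; omega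
      · have hjp : j ≠ p := by
          intro e; rw [e] at hij; rw [Fin.lt_def] at hij; omega
        exact h132 p i j (Fin.lt_def.mpr hlt) hij (by have := hne1 j hjp; omega) h'
    have monoHead : ∀ i j : Fin n, i < j → j.val < p.val → w i < w j := by
      intro i j hij hjp
      rcases htri i j (ne_of_lt hij) with h' | h'
      · exact h'
      exfalso
      have hjne : j ≠ p := by intro e; rw [e] at hjp; omega
      exact h321 i j p hij (Fin.lt_def.mpr hjp) (by have := hne1 j hjne; omega) h'
    have hbn : b + 1 ≤ n := by rw [← hb]; exact hub i0
    have hcardM : (Finset.univ.filter fun j : Fin n => w j ≤ b).card = b := by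
      have himg : (Finset.univ.filter fun j : Fin n => w j ≤ b).image w = Finset.Icc 1 b := by
        ext v
        simp only [Finset.mem_image, Finset.mem_filter, Finset.mem_univ, true_and,
          Finset.mem_Icc]
        constructor
        · rintro ⟨j, hj, rfl⟩; exact ⟨hlb j, hj⟩
        · rintro ⟨h1, h2⟩
          obtain ⟨j, hj⟩ := hsurj v h1 (by omega)
          exact ⟨j, by omega, hj⟩
      have hc := Finset.card_image_of_injective
        (Finset.univ.filter fun j : Fin n => w j ≤ b) hinj
      rw [himg, Nat.card_Icc] at hc
      omega
    have hMsub : ∀ j : Fin n, w j ≤ b → p.val ≤ j.val ∧ j.val < p.val + b := by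
      intro j hj
      have h1 : p.val ≤ j.val := by
        by_contra hc
        push_neg at hc
        have := step1 j hc
        omega
      refine ⟨h1, ?_⟩
      have hsub : (Finset.univ.filter fun k : Fin n => p.val ≤ k.val ∧ k.val ≤ j.val)
          ⊆ (Finset.univ.filter fun k : Fin n => w k ≤ b) := by
        intro k hk
        simp only [Finset.mem_filter, Finset.mem_univ, true_and] at hk ⊢
        rcases eq_or_lt_of_le hk.2 with he | hlt
        · rw [Fin.ext he]; exact hj
        · have := monoTail k j hk.1 (Fin.lt_def.mpr hlt); omega
      have hc1 := Finset.card_le_card hsub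
      rw [hcardM] at hc1
      have hc2 : (Finset.univ.filter fun k : Fin n => p.val ≤ k.val ∧ k.val ≤ j.val).card
          = j.val + 1 - p.val := by
        rw [card_filter_val n (fun x => p.val ≤ x ∧ x ≤ j.val)]
        have hjn := j.isLt
        have : (Finset.range n).filter (fun x => p.val ≤ x ∧ x ≤ j.val)
            = Finset.Icc p.val j.val := by
          ext x
          simp only [Finset.mem_filter, Finset.mem_range, Finset.mem_Icc]
          omega
        rw [this, Nat.card_Icc]
      omega
    have hMcard' : (Finset.univ.filter fun j : Fin n =>
        p.val ≤ j.val ∧ j.val < p.val + b).card ≤ b := by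
      rw [card_filter_val n (fun x => p.val ≤ x ∧ x < p.val + b)]
      have hsub : (Finset.range n).filter (fun x => p.val ≤ x ∧ x < p.val + b)
          ⊆ Finset.Ico p.val (p.val + b) := by
        intro x hx
        simp only [Finset.mem_filter, Finset.mem_range, Finset.mem_Ico] at hx ⊢
        omega
      have := Finset.card_le_card hsub
      rw [Nat.card_Ico] at this
      omega
    have hMeq : (Finset.univ.filter fun j : Fin n => w j ≤ b)
        = Finset.univ.filter fun j : Fin n => p.val ≤ j.val ∧ j.val < p.val + b := by
      apply Finset.eq_of_subset_of_card_le
      · intro j hj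
        simp only [Finset.mem_filter, Finset.mem_univ, true_and] at hj ⊢
        exact hMsub j hj
      · rw [hcardM]; exact hMcard'
    have hM : ∀ j : Fin n, w j ≤ b ↔ (p.val ≤ j.val ∧ j.val < p.val + b) := by
      intro j
      have := Finset.ext_iff.mp hMeq j
      simp only [Finset.mem_filter, Finset.mem_univ, true_and] at this
      exact this
    have hpbn : p.val + b ≤ n := by
      by_contra hc
      push_neg at hc
      have hc1 : (Finset.univ.filter fun j : Fin n =>
          p.val ≤ j.val ∧ j.val < p.val + b).card = n - p.val := by
        rw [card_filter_val n (fun x => p.val ≤ x ∧ x < p.val + b)]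
        have : (Finset.range n).filter (fun x => p.val ≤ x ∧ x < p.val + b)
            = Finset.Ico p.val n := by
          ext x
          simp only [Finset.mem_filter, Finset.mem_range, Finset.mem_Ico]
          omega
        rw [this, Nat.card_Ico]
      have hc2 : (Finset.univ.filter fun j : Fin n =>
          p.val ≤ j.val ∧ j.val < p.val + b).card = b := by rw [← hMeq]; exact hcardM
      have := p.isLt
      omega
    have step5 : ∀ i j : Fin n, i.val < p.val → p.val + b ≤ j.val → w i < w j := by
      intro i j hi hj
      have hjb : b + 1 ≤ w j := by
        by_contra hc
        push_neg at hc
        have := (hM j).mp (by omega)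
        omega
      have hj0 : j ≠ i0 := by
        intro e
        rw [e] at hj
        simp only [hi0] at hj
        omega
      have hjb2 : b + 2 ≤ w j := by
        rcases eq_or_lt_of_le hjb with he | hlt
        · exact absurd (hinj (by rw [hb, ← he]) : j = i0) hj0
        · omega
      rcases Nat.eq_zero_or_pos i.val with hz | hz
      · rw [(Fin.ext hz : i = i0), hb]; omega
      · have hij : i ≠ j := by intro e; rw [e] at hi; omega
        rcases htri i j hij with h' | h'
        · exact h'
        exfalso
        have hi0i : i0 < i := by rw [Fin.lt_def]; simpa [hi0] using hz
        exact h132 i0 i j hi0i (Fin.lt_def.mpr (by omega)) (by rw [hb]; omega) h'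
    -- the pointwise formula
    apply finish p.val b hp0 hpbn
    intro i
    by_cases hi1 : i.val < p.val
    · -- first region
      rw [if_pos hi1]
      have hset : (Finset.univ.filter fun j => w j < w i)
          = Finset.univ.filter (fun j : Fin n =>
            j.val < i.val ∨ (p.val ≤ j.val ∧ j.val < p.val + b)) := by
        ext j
        simp only [Finset.mem_filter, Finset.mem_univ, true_and]
        constructor
        · intro hji
          by_contra hc
          push_neg at hc
          obtain ⟨hc1, hc2⟩ := hc
          rcases eq_or_lt_of_le hc1 with he | hlt
          · exact absurd hji (by rw [Fin.ext he]; exact lt_irrefl _)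
          · rcases Nat.lt_or_ge j.val p.val with hjp | hjp
            · have := monoHead i j (Fin.lt_def.mpr hlt) hjp; omega
            · have := step5 i j hi1 (hc2 hjp); omega
        · intro hji
          rcases hji with hji | hji
          · exact monoHead j i (Fin.lt_def.mpr hji) hi1
          · have h1 := (hM j).mpr hji
            have h2 := step1 i hi1
            omega
      have hcard : (Finset.univ.filter fun j => w j < w i).card = i.val + b := by
        rw [hset, card_filter_val n (fun x => x < i.val ∨ (p.val ≤ x ∧ x < p.val + b))]
        have hin := i.isLt
        have heq : (Finset.range n).filter
            (fun x => x < i.val ∨ (p.val ≤ x ∧ x < p.val + b))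
            = Finset.range i.val ∪ Finset.Ico p.val (p.val + b) := by
          ext x
          simp only [Finset.mem_filter, Finset.mem_range, Finset.mem_union, Finset.mem_Ico]
          omega
        rw [heq, Finset.card_union_of_disjoint, Finset.card_range, Nat.card_Ico]
        · omega
        · rw [Finset.disjoint_left]
          intro x hx hx'
          simp only [Finset.mem_range] at hx
          simp only [Finset.mem_Ico] at hx'
          omega
      rw [hrank i, hcard]
      omega
    · push_neg at hi1
      by_cases hi2 : i.val < p.val + b
      · -- middle region
        rw [if_neg (by omega), if_pos hi2]
        have hwib : w i ≤ b := (hM i).mpr ⟨hi1, hi2⟩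
        have hset : (Finset.univ.filter fun j => w j < w i)
            = Finset.univ.filter (fun j : Fin n => p.val ≤ j.val ∧ j.val < i.val) := by
          ext j
          simp only [Finset.mem_filter, Finset.mem_univ, true_and]
          constructor
          · intro hji
            have hjb : w j ≤ b := by omega
            have h1 := ((hM j).mp hjb).1
            refine ⟨h1, ?_⟩
            by_contra hc
            push_neg at hc
            rcases eq_or_lt_of_le hc with he | hlt
            · exact absurd hji (by rw [Fin.ext he]; exact lt_irrefl _)
            · have := monoTail i j hi1 (Fin.lt_def.mpr hlt); omega
          · intro hji
            exact monoTail j i hji.1 (Fin.lt_def.mpr hji.2)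
        have hcard : (Finset.univ.filter fun j => w j < w i).card = i.val - p.val := by
          rw [hset, card_filter_val n (fun x => p.val ≤ x ∧ x < i.val)]
          have hin := i.isLt
          have heq : (Finset.range n).filter (fun x => p.val ≤ x ∧ x < i.val)
              = Finset.Ico p.val i.val := by
            ext x
            simp only [Finset.mem_filter, Finset.mem_range, Finset.mem_Ico]
            omega
          rw [heq, Nat.card_Ico]
        rw [hrank i, hcard]
      · -- last region
        push_neg at hi2
        rw [if_neg (by omega), if_neg (by omega)]
        have hset : (Finset.univ.filter fun j => w j < w i)
            = Finset.univ.filter (fun j : Fin n => j.val < i.val) := by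
          ext j
          simp only [Finset.mem_filter, Finset.mem_univ, true_and]
          constructor
          · intro hji
            by_contra hc
            push_neg at hc
            rcases eq_or_lt_of_le hc with he | hlt
            · exact absurd hji (by rw [Fin.ext he]; exact lt_irrefl _)
            · have := monoTail i j (by omega) (Fin.lt_def.mpr hlt); omega
          · intro hji
            rcases Nat.lt_or_ge j.val p.val with hjp | hjp
            · exact step5 j i hjp hi2
            · exact monoTail j i hjp (Fin.lt_def.mpr hji)
        have hcard : (Finset.univ.filter fun j => w j < w i).card = i.val := by
          rw [hset, card_filter_val n (fun x => x < i.val)]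
          have hin := i.isLt
          have heq : (Finset.range n).filter (fun x => x < i.val) = Finset.range i.val := by
            ext x
            simp only [Finset.mem_filter, Finset.mem_range]
            omega
          rw [heq, Finset.card_range]
        rw [hrank i, hcard]
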